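/- Let Ω = (a₁,b₁)×(a₂,b₂)×(a₃,b₃) ⊂ ℝ³ and let u ∈ C²(Ω̄; ℝ³) satisfy u·n = 0 on ∂Ω. Then ∫_Ω (∇u + ∇ᵀu − (2/3)(div u) I) : ∇u dx = ∫_Ω |∇u|² dx + (1/3)∫_Ω (div u)² dx. In particular ‖∇u‖²_{L²(Ω)} ≤ ∫_Ω (∇u + ∇ᵀu − (2/3) div u I) : ∇u dx. -/

import Mathlib

open MeasureTheory Set

/-- The Jacobian entry `∂_j u^i` at `x`. -/
noncomputable def jac (u : (Fin 3 → ℝ) → (Fin 3 → ℝ)) (x : Fin 3 → ℝ) (i j : Fin 3) : ℝ :=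
  fderiv ℝ u x (Pi.single j 1) i

namespace Stmt2Aux

noncomputable def pr (k : Fin 3) : (Fin 3 → ℝ) →L[ℝ] ℝ := ContinuousLinearMap.proj k

@[simp] lemma pr_apply (k : Fin 3) (v : Fin 3 → ℝ) : pr k v = v k := rfl

noncomputable def dv (u : (Fin 3 → ℝ) → (Fin 3 → ℝ)) (x : Fin 3 → ℝ) : ℝ :=
  ∑ k, jac u x k k

noncomputable def Fv (u : (Fin 3 → ℝ) → (Fin 3 → ℝ)) (i : Fin 3) (x : Fin 3 → ℝ) : ℝ :=
  (∑ k, u x k * jac u x i k) - u x i * dv u x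

/-- evaluation CLM : A ↦ A (e j) i -/
noncomputable def ev (i j : Fin 3) :
    ((Fin 3 → ℝ) →L[ℝ] (Fin 3 → ℝ)) →L[ℝ] ℝ :=
  (pr i).comp (ContinuousLinearMap.apply ℝ (Fin 3 → ℝ) (Pi.single j 1))

@[simp] lemma ev_apply (i j : Fin 3) (A : (Fin 3 → ℝ) →L[ℝ] (Fin 3 → ℝ)) :
    ev i j A = A (Pi.single j 1) i := rfl

lemma jac_eq (u : (Fin 3 → ℝ) → (Fin 3 → ℝ)) (x : Fin 3 → ℝ) (i j : Fin 3) :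
    jac u x i j = ev i j (fderiv ℝ u x) := rfl

variable {u : (Fin 3 → ℝ) → (Fin 3 → ℝ)}

lemma hg (hu : ContDiff ℝ 2 u) : ContDiff ℝ 1 (fderiv ℝ u) := hu.fderiv_right (by norm_num)

lemma contDiff_jac (hu : ContDiff ℝ 2 u) (i j : Fin 3) : ContDiff ℝ 1 (fun x => jac u x i j) :=
  (ev i j).contDiff.comp (hg hu)

lemma hasFDerivAt_jac (hu : ContDiff ℝ 2 u) (i j : Fin 3) (x : Fin 3 → ℝ) :
    HasFDerivAt (fun x => jac u x i j)
      ((ev i j).comp (fderiv ℝ (fderiv ℝ u) x)) x :=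
  (ev i j).hasFDerivAt.comp x ((hg hu).differentiable one_ne_zero x).hasFDerivAt

lemma hasFDerivAt_comp_proj (hu : ContDiff ℝ 2 u) (k : Fin 3) (x : Fin 3 → ℝ) :
    HasFDerivAt (fun x => u x k)
      ((pr k).comp (fderiv ℝ u x)) x :=
  (pr k).hasFDerivAt.comp x (hu.differentiable two_ne_zero x).hasFDerivAt

lemma hasFDerivAt_dv (hu : ContDiff ℝ 2 u) (x : Fin 3 → ℝ) :
    HasFDerivAt (dv u) (∑ k, (ev k k).comp (fderiv ℝ (fderiv ℝ u) x)) x :=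
  HasFDerivAt.fun_sum fun k _ => hasFDerivAt_jac hu k k x

noncomputable def Φ (u : (Fin 3 → ℝ) → (Fin 3 → ℝ)) (i : Fin 3) (x : Fin 3 → ℝ) :
    (Fin 3 → ℝ) →L[ℝ] ℝ :=
  (∑ k, (u x k • ((ev i k).comp (fderiv ℝ (fderiv ℝ u) x))
      + jac u x i k • ((pr k).comp (fderiv ℝ u x))))
    - (u x i • (∑ k, (ev k k).comp (fderiv ℝ (fderiv ℝ u) x))
      + dv u x • ((pr i).comp (fderiv ℝ u x)))

lemma hasFDerivAt_Fv (hu : ContDiff ℝ 2 u) (i : Fin 3) (x : Fin 3 → ℝ) :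
    HasFDerivAt (Fv u i) (Φ u i x) x := by
  have h1 : HasFDerivAt (fun x => ∑ k, u x k * jac u x i k)
      (∑ k, (u x k • ((ev i k).comp (fderiv ℝ (fderiv ℝ u) x))
        + jac u x i k • ((pr k).comp (fderiv ℝ u x)))) x :=
    HasFDerivAt.fun_sum fun k _ =>
      (hasFDerivAt_comp_proj hu k x).mul (hasFDerivAt_jac hu i k x)
  have h2 : HasFDerivAt (fun x => u x i * dv u x)
      (u x i • (∑ k, (ev k k).comp (fderiv ℝ (fderiv ℝ u) x))
        + dv u x • ((pr i).comp (fderiv ℝ u x))) x :=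
    (hasFDerivAt_comp_proj hu i x).mul (hasFDerivAt_dv hu x)
  exact h1.sub h2


lemma contDiff_Fv (hu : ContDiff ℝ 2 u) (i : Fin 3) : ContDiff ℝ 1 (Fv u i) := by
  unfold Fv
  exact ContDiff.sub
    (ContDiff.sum fun k _ =>
      (((pr k).contDiff.comp (hu.of_le one_le_two)).mul (contDiff_jac hu i k)))
    (((pr i).contDiff.comp (hu.of_le one_le_two)).mul
      (ContDiff.sum fun k _ => contDiff_jac hu k k))

lemma sum_div_F (hu : ContDiff ℝ 2 u) (x : Fin 3 → ℝ) :
    ∑ i, fderiv ℝ (Fv u i) x (Pi.single i 1)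
      = (∑ i, ∑ j, jac u x j i * jac u x i j) - (dv u x) ^ 2 := by
  have hsym : ∀ v w : Fin 3 → ℝ,
      fderiv ℝ (fderiv ℝ u) x v w = fderiv ℝ (fderiv ℝ u) x w v :=
    second_derivative_symmetric
      (fun y => (hu.differentiable two_ne_zero y).hasFDerivAt)
      (((hg hu).differentiable one_ne_zero x).hasFDerivAt)
  have h : ∀ (v w : Fin 3 → ℝ) (i : Fin 3),
      fderiv ℝ (fderiv ℝ u) x v w i = fderiv ℝ (fderiv ℝ u) x w v i :=
    fun v w i => congrFun (hsym v w) i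
  have hfd : ∀ i, fderiv ℝ (Fv u i) x = Φ u i x :=
    fun i => (hasFDerivAt_Fv hu i x).fderiv
  simp only [hfd]
  unfold Φ dv
  simp only [ContinuousLinearMap.sub_apply, ContinuousLinearMap.add_apply,
    ContinuousLinearMap.coe_sum', Finset.sum_apply, ContinuousLinearMap.smul_apply,
    ContinuousLinearMap.coe_comp', Function.comp_apply, ev_apply, pr_apply,
    smul_eq_mul]
  have hjac : ∀ i j : Fin 3, fderiv ℝ u x (Pi.single j 1) i = jac u x i j := fun _ _ => rfl
  simp only [hjac, Fin.sum_univ_three]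
  set D := fderiv ℝ (fderiv ℝ u) x
  linear_combination
    (u x 1) * h (Pi.single 0 1) (Pi.single 1 1) 0 +
    (u x 2) * h (Pi.single 0 1) (Pi.single 2 1) 0 +
    (u x 0) * h (Pi.single 1 1) (Pi.single 0 1) 1 +
    (u x 2) * h (Pi.single 1 1) (Pi.single 2 1) 1 +
    (u x 0) * h (Pi.single 2 1) (Pi.single 0 1) 2 +
    (u x 1) * h (Pi.single 2 1) (Pi.single 1 1) 2


lemma jac_tangent_zero (hu : ContDiff ℝ 2 u) {a b : Fin 3 → ℝ} (hab : ∀ i, a i < b i)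
    (hbc : ∀ i : Fin 3, ∀ x ∈ Set.univ.pi (fun j => Set.Icc (a j) (b j)),
      (x i = a i ∨ x i = b i) → u x i = 0)
    {i k : Fin 3} (hk : k ≠ i) {x : Fin 3 → ℝ} (hx : x ∈ Icc a b)
    (hxi : x i = a i ∨ x i = b i) : jac u x i k = 0 := by
  set c : ℝ → (Fin 3 → ℝ) := fun t => x + t • (Pi.single k 1 : Fin 3 → ℝ) with hc
  have hc0 : c 0 = x := by simp [hc]
  have hline : HasDerivAt c (Pi.single k 1) 0 := by
    have h1 : HasDerivAt (fun t : ℝ => x + t • (Pi.single k 1 : Fin 3 → ℝ))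
        ((1:ℝ) • (Pi.single k 1 : Fin 3 → ℝ)) 0 :=
      ((hasDerivAt_id (0:ℝ)).smul_const _).const_add x
    simpa [hc] using h1
  have hcomp : HasDerivAt (fun t => u (c t) i)
      (((pr i).comp (fderiv ℝ u x)) (Pi.single k 1)) 0 := by
    have h2 := (hasFDerivAt_comp_proj hu i (c 0)).comp_hasDerivAt 0 hline
    rw [hc0] at h2
    exact h2
  set s : Set ℝ := Icc (a k - x k) (b k - x k) with hs
  have h0s : (0:ℝ) ∈ s := ⟨by linarith [hx.1 k], by linarith [hx.2 k]⟩
  have hzero : ∀ t ∈ s, u (c t) i = 0 := by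
    intro t ht
    apply hbc i
    · rw [Set.mem_univ_pi]
      intro j
      rcases eq_or_ne j k with rfl | hjk
      · refine ⟨?_, ?_⟩ <;> simp only [hc, Pi.add_apply, Pi.smul_apply,
          Pi.single_eq_same, smul_eq_mul, mul_one]
        · linarith [ht.1]
        · linarith [ht.2]
      · simpa [hc, Pi.single_eq_of_ne hjk] using ⟨hx.1 j, hx.2 j⟩
    · simpa [hc, Pi.single_eq_of_ne (show i ≠ k from fun h => hk h.symm)] using hxi
  have hud : UniqueDiffWithinAt ℝ s 0 :=
    (uniqueDiffOn_Icc (by linarith [hab k])) 0 h0s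
  have hzero' : HasDerivWithinAt (fun t => u (c t) i)
      (((pr i).comp (fderiv ℝ u x)) (Pi.single k 1)) s 0 := hcomp.hasDerivWithinAt
  have hconst : HasDerivWithinAt (fun t => u (c t) i) 0 s 0 :=
    (hasDerivWithinAt_const 0 s (0:ℝ)).congr hzero (hzero 0 h0s)
  have heq := hud.eq_deriv _ hzero' hconst
  simpa [jac] using heq

lemma Fv_face_zero (hu : ContDiff ℝ 2 u) {a b : Fin 3 → ℝ} (hab : ∀ i, a i < b i)
    (hbc : ∀ i : Fin 3, ∀ x ∈ Set.univ.pi (fun j => Set.Icc (a j) (b j)),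
      (x i = a i ∨ x i = b i) → u x i = 0)
    {i : Fin 3} {x : Fin 3 → ℝ} (hx : x ∈ Icc a b)
    (hxi : x i = a i ∨ x i = b i) : Fv u i x = 0 := by
  have hui : u x i = 0 := by
    apply hbc i x _ hxi
    rwa [Set.pi_univ_Icc]
  unfold Fv
  rw [hui, zero_mul, sub_zero]
  apply Finset.sum_eq_zero
  intro k _
  rcases eq_or_ne k i with rfl | hki
  · rw [hui, zero_mul]
  · rw [jac_tangent_zero hu hab hbc hki hx hxi, mul_zero]


lemma cross_eq_dv_sq (hu : ContDiff ℝ 2 u) {a b : Fin 3 → ℝ} (hab : ∀ i, a i < b i)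
    (hbc : ∀ i : Fin 3, ∀ x ∈ Set.univ.pi (fun j => Set.Icc (a j) (b j)),
      (x i = a i ∨ x i = b i) → u x i = 0) :
    ∫ x in Icc a b, ((∑ i, ∑ j, jac u x j i * jac u x i j) - (dv u x) ^ 2) = 0 := by
  have hle : a ≤ b := fun i => (hab i).le
  have hj : ∀ i j, Continuous fun x => jac u x i j :=
    fun i j => (contDiff_jac hu i j).continuous
  have hcont : Continuous
      (fun x => (∑ i, ∑ j, jac u x j i * jac u x i j) - (dv u x) ^ 2) := by
    refine Continuous.sub ?_ (Continuous.pow ?_ 2)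
    · exact continuous_finset_sum _ fun i _ =>
        continuous_finset_sum _ fun j _ => (hj j i).mul (hj i j)
    · exact continuous_finset_sum _ fun k _ => hj k k
  have hrw : (fun x => ∑ i, Φ u i x (Pi.single i 1))
      = (fun x => (∑ i, ∑ j, jac u x j i * jac u x i j) - (dv u x) ^ 2) := by
    funext x
    rw [← sum_div_F hu x]
    exact Finset.sum_congr rfl fun i _ => by rw [(hasFDerivAt_Fv hu i x).fderiv]
  have key := MeasureTheory.integral_divergence_of_hasFDerivAt_off_countable' a b hle
      (Fv u) (fun i x => Φ u i x) ∅ Set.countable_empty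
      (fun i => (contDiff_Fv hu i).continuous.continuousOn)
      (fun x _ i => hasFDerivAt_Fv hu i x)
      (by rw [hrw]; exact hcont.continuousOn.integrableOn_compact isCompact_Icc)
  rw [hrw] at key
  rw [key]
  apply Finset.sum_eq_zero
  intro i _
  have hface : ∀ (c : ℝ), c ∈ Icc (a i) (b i) →
      (∀ y ∈ Icc (a ∘ i.succAbove) (b ∘ i.succAbove),
        (i.insertNth c y : Fin 3 → ℝ) ∈ Icc a b) :=
    fun c hc y hy => Fin.insertNth_mem_Icc.2 ⟨hc, hy⟩
  have h1 : ∫ y in Icc (a ∘ i.succAbove) (b ∘ i.succAbove),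
      Fv u i (i.insertNth (b i) y) = 0 := by
    rw [setIntegral_congr_fun measurableSet_Icc
      (fun y hy => Fv_face_zero hu hab hbc (hface (b i) ⟨(hab i).le, le_rfl⟩ y hy)
        (Or.inr (by simp)))]
    exact integral_zero _ _
  have h2 : ∫ y in Icc (a ∘ i.succAbove) (b ∘ i.succAbove),
      Fv u i (i.insertNth (a i) y) = 0 := by
    rw [setIntegral_congr_fun measurableSet_Icc
      (fun y hy => Fv_face_zero hu hab hbc (hface (a i) ⟨le_rfl, (hab i).le⟩ y hy)
        (Or.inl (by simp)))]
    exact integral_zero _ _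
  rw [h1, h2, sub_zero]

end Stmt2Aux

theorem stmt2 (a b : Fin 3 → ℝ) (hab : ∀ i, a i < b i)
    (u : (Fin 3 → ℝ) → (Fin 3 → ℝ)) (hu : ContDiff ℝ 2 u)
    (hbc : ∀ i : Fin 3, ∀ x ∈ Set.univ.pi (fun j => Set.Icc (a j) (b j)),
      (x i = a i ∨ x i = b i) → u x i = 0) :
    (∫ x in Set.univ.pi (fun i => Set.Ioo (a i) (b i)),
        ∑ i : Fin 3, ∑ j : Fin 3,
          (jac u x i j + jac u x j i
            - (2/3) * (∑ k : Fin 3, jac u x k k) * (if i = j then 1 else 0)) * jac u x i j)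
      = (∫ x in Set.univ.pi (fun i => Set.Ioo (a i) (b i)),
          ∑ i : Fin 3, ∑ j : Fin 3, (jac u x i j) ^ 2)
        + (1/3) * (∫ x in Set.univ.pi (fun i => Set.Ioo (a i) (b i)),
            (∑ k : Fin 3, jac u x k k) ^ 2)
    ∧ (∫ x in Set.univ.pi (fun i => Set.Ioo (a i) (b i)),
          ∑ i : Fin 3, ∑ j : Fin 3, (jac u x i j) ^ 2)
      ≤ (∫ x in Set.univ.pi (fun i => Set.Ioo (a i) (b i)),
          ∑ i : Fin 3, ∑ j : Fin 3,
            (jac u x i j + jac u x j i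
              - (2/3) * (∑ k : Fin 3, jac u x k k) * (if i = j then 1 else 0)) * jac u x i j) := by
  have hj : ∀ i j, Continuous fun x => jac u x i j :=
    fun i j => (Stmt2Aux.contDiff_jac hu i j).continuous
  set S : (Fin 3 → ℝ) → ℝ := fun x => ∑ i, ∑ j, jac u x i j ^ 2 with hSdef
  set C : (Fin 3 → ℝ) → ℝ := fun x => ∑ i, ∑ j, jac u x j i * jac u x i j with hCdef
  set Q : (Fin 3 → ℝ) → ℝ := fun x => (∑ k, jac u x k k) ^ 2 with hQdef
  set L : (Fin 3 → ℝ) → ℝ := fun x => ∑ i : Fin 3, ∑ j : Fin 3,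
      (jac u x i j + jac u x j i
        - (2/3) * (∑ k : Fin 3, jac u x k k) * (if i = j then 1 else 0)) * jac u x i j with hLdef
  have hSc : Continuous S := continuous_finset_sum _ fun i _ =>
    continuous_finset_sum _ fun j _ => (hj i j).pow 2
  have hCc : Continuous C := continuous_finset_sum _ fun i _ =>
    continuous_finset_sum _ fun j _ => (hj j i).mul (hj i j)
  have hQc : Continuous Q := (continuous_finset_sum _ fun k _ => hj k k).pow 2
  have hInt : ∀ f : (Fin 3 → ℝ) → ℝ, Continuous f → IntegrableOn f (Icc a b) :=
    fun f hf => hf.continuousOn.integrableOn_compact isCompact_Icc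
  have hpt : ∀ x, L x = S x + ((C x - Q x) + (1/3) * Q x) := by
    intro x
    simp only [hLdef, hSdef, hCdef, hQdef, Fin.sum_univ_three]
    norm_num [Fin.ext_iff]
    ring
  have hkey : ∫ x in Icc a b, (C x - Q x) = 0 := Stmt2Aux.cross_eq_dv_sq hu hab hbc
  have hset : ∀ f : (Fin 3 → ℝ) → ℝ,
      ∫ x in Set.univ.pi (fun i => Set.Ioo (a i) (b i)), f x = ∫ x in Icc a b, f x :=
    fun f => setIntegral_congr_set MeasureTheory.Measure.univ_pi_Ioo_ae_eq_Icc
  have main : ∫ x in Icc a b, L x = (∫ x in Icc a b, S x) + (1/3) * ∫ x in Icc a b, Q x := by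
    have h1 : (fun x => L x) = fun x => S x + ((C x - Q x) + (1/3) * Q x) := funext hpt
    have hIa : IntegrableOn (fun x => C x - Q x) (Icc a b) := hInt _ (hCc.sub hQc)
    have hIb : IntegrableOn (fun x => (1/3 : ℝ) * Q x) (Icc a b) :=
      hInt _ (continuous_const.mul hQc)
    have hIab : IntegrableOn (fun x => (C x - Q x) + (1/3 : ℝ) * Q x) (Icc a b) :=
      hIa.add hIb
    rw [h1, integral_add (hInt _ hSc) hIab, integral_add hIa hIb, hkey, integral_const_mul]
    ring
  constructor
  · rw [hset L, hset S, hset Q, main]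
  · rw [hset L, hset S, main]
    have hQnn : 0 ≤ ∫ x in Icc a b, Q x :=
      setIntegral_nonneg measurableSet_Icc fun x _ => sq_nonneg _
    nlinarith
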